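/- Assume each agent is eligible for at most one preferential category and all categories' priorities are consistent with the baseline ordering. Then the outcome of the minimum-guarantees rule (i) complies with the eligibility requirements, (ii) is a maximum beneficiary assignment, (iii) respects priorities, (iv) is non-wasteful, and (v) is order preserving for q_{c_u^1} = 0 and q_{c_u^2} = q_{c_u}. -/

import Mathlib

open scoped Classical

/-- An instance of the rationing problem: a quota for every category and, for every
category `c`, a priority ranking `≿_c`: a total preorder on `N ∪ {∅}`, where we model
`N ∪ {∅}` as `Option N` with `none` playing the role of `∅`. -/
structure Inst (N C : Type*) where
  quota : C → ℕ
  prio : C → Option N → Option N → Prop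
  total : ∀ c x y, prio c x y ∨ prio c y x
  trans : ∀ c x y z, prio c x y → prio c y z → prio c x z

namespace Inst

variable {N C : Type*}

/-- The strict part `≻_c` of the priority ranking `≿_c`. -/
def Strict (I : Inst N C) (c : C) (x y : Option N) : Prop :=
  I.prio c x y ∧ ¬ I.prio c y x

/-- Agent `i` is eligible for category `c` if `i ≻_c ∅`. -/
def Eligible (I : Inst N C) (i : N) (c : C) : Prop :=
  I.Strict c (some i) none

end Inst

variable {N C : Type*} [Fintype N] [DecidableEq N] [DecidableEq C]

/-- The number of matched agents of (the function) `μ`. -/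
def msize (μ : N → Option C) : ℕ :=
  (Finset.univ.filter fun i => μ i ≠ none).card

/-- `μ` satisfies the capacity constraints: every category `c` is matched
to at most `quota c` agents. -/
def Inst.IsMatching (I : Inst N C) (μ : N → Option C) : Prop :=
  ∀ c, (Finset.univ.filter fun i => μ i = some c).card ≤ I.quota c

/-- A baseline ordering `≻_π`, given as a duplicate-free list of all agents,
listed from highest priority to lowest priority; so `i ≻_π j` iff
`order.idxOf i < order.idxOf j`. -/
def IsBaseline (order : List N) : Prop :=
  order.Nodup ∧ ∀ i : N, i ∈ order

/-- `μ` complies with the eligibility requirements. -/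
def Complies (I : Inst N C) (μ : N → Option C) : Prop :=
  ∀ (i : N) (c : C), μ i = some c → I.Eligible i c

/-- `μ` respects priorities: no unmatched agent has strictly higher priority for some
category than an agent matched to it. -/
def RespectsPriorities (I : Inst N C) (μ : N → Option C) : Prop :=
  ¬ ∃ (i j : N) (c : C), μ i = some c ∧ μ j = none ∧ I.Strict c (some j) (some i)

/-- The number of agents matched to category `c` by `μ`. -/
def catCount (μ : N → Option C) (c : C) : ℕ :=
  (Finset.univ.filter fun i => μ i = some c).card

/-- `μ` is non-wasteful: an eligible agent is only left unmatched if all units of the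
category are used. -/
def NonWasteful (I : Inst N C) (μ : N → Option C) : Prop :=
  ∀ (i : N) (c : C), I.Eligible i c → μ i = none → catCount μ c = I.quota c

/-- The number of agents matched to a preferential category (a category other than the
unreserved category `cu`). -/
def beneCount (cu : C) (μ : N → Option C) : ℕ :=
  (Finset.univ.filter fun i => μ i ≠ none ∧ μ i ≠ some cu).card

/-- `μ` is a maximum beneficiary assignment: it maximizes the number of agents matched to
preferential categories among all matchings complying with the eligibility requirements. -/
def MaxBene (I : Inst N C) (cu : C) (μ : N → Option C) : Prop :=
  ∀ ν : N → Option C, I.IsMatching ν → Complies I ν → beneCount cu ν ≤ beneCount cu μ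

/-- The priorities are consistent with the baseline ordering: for each category the
eligible agents are ranked according to `≻_π`. -/
def Consistent (I : Inst N C) (order : List N) : Prop :=
  ∀ (c : C) (i j : N), I.Eligible i c → I.Eligible j c →
    (I.Strict c (some i) (some j) ↔ order.idxOf i < order.idxOf j)

/-- Each agent is eligible for at most one preferential category. -/
def OneCategory (I : Inst N C) (cu : C) : Prop :=
  ∀ (i : N) (c c' : C), c ≠ cu → c' ≠ cu → I.Eligible i c → I.Eligible i c' → c = c'

/-- One step of the minimum-guarantees rule: the considered agent is matched to a
preferential category she is eligible for if a unit of it remains, and otherwise to the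
unreserved category if an unreserved unit remains. -/
noncomputable def mgStep (I : Inst N C) (cu : C) (μ : N → Option C) (i : N) : N → Option C :=
  if h : ∃ c, c ≠ cu ∧ I.Eligible i c ∧ catCount μ c < I.quota c then
    Function.update μ i (some h.choose)
  else if catCount μ cu < I.quota cu then Function.update μ i (some cu)
  else μ

/-- The outcome of the minimum-guarantees rule: the agents are considered in order of the
baseline ordering from highest to lowest priority. -/
noncomputable def mgOutcome (I : Inst N C) (cu : C) (order : List N) : N → Option C :=
  order.foldl (mgStep I cu) fun _ => none

/-- Order preservation for `q_{c_u^1} = 0` and `q_{c_u^2} = q_{c_u}` (the unreserved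
category `cu` plays the role of `c_u^2`, and no agent is matched to `c_u^1`, so clause (i)
is vacuous): if `μ(j) ∈ C_p`, `i ≻_{μ(j)} j`, and `i` is eligible for `μ(j)`, then
`μ(i) ≠ c_u^2 = cu`. -/
def OrderPreservingMG (I : Inst N C) (cu : C) (μ : N → Option C) : Prop :=
  ∀ (i j : N) (ci cj : C), μ i = some ci → μ j = some cj → cj ≠ cu →
    I.Strict cj (some i) (some j) → I.Eligible i cj → ci ≠ cu

/-- One step of the first phase of the over-and-above rule: the considered agent `i` is
matched to the unreserved category only if an unreserved unit remains and, for any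
preferential category `c` that `i` is eligible for, at least `q_c` agents of `N_c` other
than `i` are still unmatched. -/
noncomputable def oaStep (I : Inst N C) (cu : C) (σ : N → Option C) (i : N) : N → Option C :=
  if catCount σ cu < I.quota cu ∧
      ∀ c : C, c ≠ cu → I.Eligible i c →
        I.quota c ≤ (Finset.univ.filter fun j => j ≠ i ∧ I.Eligible j c ∧ σ j = none).card then
    Function.update σ i (some cu)
  else σ

/-- The first phase of the over-and-above rule (allocation of the unreserved units),
considering the agents in order of the baseline ordering from highest to lowest priority. -/
noncomputable def oaPhase1 (I : Inst N C) (cu : C) (order : List N) : N → Option C :=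
  order.foldl (oaStep I cu) fun _ => none

/-- The outcome of the over-and-above rule: after the first phase, each preferential
category `c` is filled with the `min {q_c, |N_c|}` highest (baseline) priority agents of
`N_c` who are still unmatched. -/
noncomputable def oaOutcome (I : Inst N C) (cu : C) (order : List N) : N → Option C :=
  fun i =>
    if oaPhase1 I cu order i = some cu then some cu
    else if h : ∃ c, c ≠ cu ∧ I.Eligible i c ∧
        (Finset.univ.filter fun j => I.Eligible j c ∧ oaPhase1 I cu order j = none ∧
          order.idxOf j < order.idxOf i).card < I.quota c then
      some h.choose
    else none

/-- Order preservation for `q_{c_u^1} = q_{c_u}` and `q_{c_u^2} = 0` (the unreserved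
category `cu` plays the role of `c_u^1`, and no agent is matched to `c_u^2`, so clause (ii)
is vacuous): if `μ(i) ∈ C_p`, `i ≻_{μ(j)} j`, and `j` is eligible for `μ(i)`, then
`μ(j) ≠ c_u^1 = cu`. -/
def OrderPreservingOA (I : Inst N C) (cu : C) (μ : N → Option C) : Prop :=
  ∀ (i j : N) (ci cj : C), μ i = some ci → μ j = some cj → ci ≠ cu →
    I.Strict cj (some i) (some j) → I.Eligible j ci → cj ≠ cu


section MGHelpers

variable (I : Inst N C) (cu : C)

lemma elig_of_strict {c : C} {i j : N} (hs : I.Strict c (some j) (some i))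
    (hi : I.Eligible i c) : I.Eligible j c := by
  obtain ⟨h1, _⟩ := hs
  obtain ⟨h3, h4⟩ := hi
  exact ⟨I.trans c _ _ _ h1 h3, fun h => h4 (I.trans c _ _ _ h h1)⟩

lemma mgStep_apply_ne (μ : N → Option C) {i j : N} (h : j ≠ i) :
    mgStep I cu μ i j = μ j := by
  unfold mgStep
  split_ifs <;> simp [Function.update_of_ne h]

lemma foldl_not_mem {l : List N} (μ : N → Option C) {j : N} (h : j ∉ l) :
    l.foldl (mgStep I cu) μ j = μ j := by
  induction l generalizing μ with
  | nil => rfl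
  | cons a t ih =>
    simp only [List.mem_cons, not_or] at h
    rw [List.foldl_cons, ih _ h.2, mgStep_apply_ne I cu μ h.1]

lemma catCount_update_ge (μ : N → Option C) {i : N} (hi : μ i = none) (d c : C) :
    catCount μ c ≤ catCount (Function.update μ i (some d)) c := by
  apply Finset.card_le_card
  intro k hk
  simp only [Finset.mem_filter, Finset.mem_univ, true_and] at *
  rcases eq_or_ne k i with rfl | h
  · rw [hi] at hk; exact absurd hk (by simp)
  · rwa [Function.update_of_ne h]

lemma catCount_mgStep_ge (μ : N → Option C) {i : N} (hi : μ i = none) (c : C) :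
    catCount μ c ≤ catCount (mgStep I cu μ i) c := by
  unfold mgStep
  split_ifs with h1 h2
  · exact catCount_update_ge μ hi _ c
  · exact catCount_update_ge μ hi _ c
  · exact le_refl _

lemma catCount_update_ne (μ : N → Option C) (i : N) {d c : C} (h : c ≠ d) :
    catCount (Function.update μ i (some d)) c ≤ catCount μ c := by
  apply Finset.card_le_card
  intro k hk
  simp only [Finset.mem_filter, Finset.mem_univ, true_and] at *
  rcases eq_or_ne k i with rfl | hk'
  · rw [Function.update_self] at hk
    exact absurd (by injection hk) h.symm
  · rwa [Function.update_of_ne hk'] at hk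

lemma catCount_update_self (μ : N → Option C) (i : N) (d : C) :
    catCount (Function.update μ i (some d)) d ≤ catCount μ d + 1 := by
  have hsub : (Finset.univ.filter fun k => Function.update μ i (some d) k = some d) ⊆
      insert i (Finset.univ.filter fun k => μ k = some d) := by
    intro k hk
    simp only [Finset.mem_filter, Finset.mem_univ, true_and, Finset.mem_insert] at *
    rcases eq_or_ne k i with rfl | h
    · exact Or.inl rfl
    · right; rwa [Function.update_of_ne h] at hk
  calc catCount (Function.update μ i (some d)) d
      ≤ (insert i (Finset.univ.filter fun k => μ k = some d)).card :=
        Finset.card_le_card hsub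
    _ ≤ catCount μ d + 1 := Finset.card_insert_le _ _

lemma isMatching_mgStep {μ : N → Option C} (h : I.IsMatching μ) (i : N) :
    I.IsMatching (mgStep I cu μ i) := by
  unfold mgStep
  split_ifs with h1 h2
  · intro c
    rcases eq_or_ne c h1.choose with rfl | hc
    · exact le_trans (catCount_update_self μ i _) (Nat.succ_le_of_lt h1.choose_spec.2.2)
    · exact le_trans (catCount_update_ne μ i hc) (h c)
  · intro c
    rcases eq_or_ne c cu with rfl | hc
    · exact le_trans (catCount_update_self μ i _) (Nat.succ_le_of_lt h2)
    · exact le_trans (catCount_update_ne μ i hc) (h c)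
  · exact h

lemma complies_mgStep (hcuE : ∀ i, I.Eligible i cu) {μ : N → Option C}
    (h : Complies I μ) (i : N) : Complies I (mgStep I cu μ i) := by
  unfold mgStep
  split_ifs with h1 h2
  · intro j c hj
    rcases eq_or_ne j i with rfl | hne
    · rw [Function.update_self] at hj
      obtain rfl : h1.choose = c := by injection hj
      exact h1.choose_spec.2.1
    · rw [Function.update_of_ne hne] at hj; exact h j c hj
  · intro j c hj
    rcases eq_or_ne j i with rfl | hne
    · rw [Function.update_self] at hj
      obtain rfl : cu = c := by injection hj
      exact hcuE j
    · rw [Function.update_of_ne hne] at hj; exact h j c hj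
  · exact h

lemma isMatching_foldl (l : List N) {μ : N → Option C} (h : I.IsMatching μ) :
    I.IsMatching (l.foldl (mgStep I cu) μ) := by
  induction l generalizing μ with
  | nil => exact h
  | cons a t ih => exact ih (isMatching_mgStep I cu h a)

lemma complies_foldl (hcuE : ∀ i, I.Eligible i cu) (l : List N) {μ : N → Option C}
    (h : Complies I μ) : Complies I (l.foldl (mgStep I cu) μ) := by
  induction l generalizing μ with
  | nil => exact h
  | cons a t ih => exact ih (complies_mgStep I cu hcuE h a)

lemma catCount_foldl_ge {l : List N} (hl : l.Nodup) {μ : N → Option C}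
    (hμ : ∀ i ∈ l, μ i = none) (c : C) :
    catCount μ c ≤ catCount (l.foldl (mgStep I cu) μ) c := by
  induction l generalizing μ with
  | nil => exact le_refl _
  | cons a t ih =>
    rw [List.foldl_cons]
    refine le_trans (catCount_mgStep_ge I cu μ (hμ a (List.mem_cons_self)) c)
      (ih hl.of_cons ?_)
    intro j hj
    rw [mgStep_apply_ne I cu μ (fun hja => (List.nodup_cons.1 hl).1 (by rw [← hja]; exact hj))]
    exact hμ j (List.mem_cons_of_mem a hj)

lemma indexOf_lt_of_mem_take {l : List N} {n : ℕ} {j : N} (h : j ∈ l.take n) :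
    l.idxOf j < n := by
  induction l generalizing n with
  | nil => simp at h
  | cons a t ih =>
    cases n with
    | zero => simp at h
    | succ m =>
      rw [List.take_succ_cons, List.mem_cons] at h
      rcases eq_or_ne j a with rfl | hne
      · simp [List.idxOf_cons_self]
      · rw [List.idxOf_cons_ne _ hne.symm]
        exact Nat.succ_lt_succ (ih (h.resolve_left hne))

lemma not_mem_take_indexOf (l : List N) (j : N) : j ∉ l.take (l.idxOf j) :=
  fun h => lt_irrefl _ (indexOf_lt_of_mem_take h)

lemma mem_take_of_indexOf_lt {l : List N} {j : N} (hjl : j ∈ l) {n : ℕ}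
    (h : l.idxOf j < n) : j ∈ l.take n := by
  have hlen : l.idxOf j < l.length := List.idxOf_lt_length_iff.2 hjl
  have hlt : l.idxOf j < (l.take n).length := by
    rw [List.length_take]; exact lt_min h hlen
  have : (l.take n)[l.idxOf j] = j := by
    rw [List.getElem_take]; exact List.getElem_idxOf hlen
  exact this ▸ List.getElem_mem hlt

/-- The prefix fold of the minimum-guarantees rule. -/
noncomputable def mgPrefix (order : List N) (t : ℕ) : N → Option C :=
  (order.take t).foldl (mgStep I cu) fun _ => none

lemma mgPrefix_not_mem_take (order : List N) {t : ℕ} {j : N} (h : j ∉ order.take t) :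
    mgPrefix I cu order t j = none :=
  foldl_not_mem I cu _ h

lemma mgPrefix_self_none (order : List N) (j : N) :
    mgPrefix I cu order (order.idxOf j) j = none :=
  mgPrefix_not_mem_take I cu order (not_mem_take_indexOf order j)

lemma mgPrefix_mono (order : List N) (hb : order.Nodup) {t s : ℕ} (hts : t ≤ s) (c : C) :
    catCount (mgPrefix I cu order t) c ≤ catCount (mgPrefix I cu order s) c := by
  have hs : order.take s = order.take t ++ (order.drop t).take (s - t) := by
    rw [← List.take_add]; congr 1; omega
  unfold mgPrefix
  rw [hs, List.foldl_append]
  apply catCount_foldl_ge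
  · exact ((List.take_sublist _ _).trans (List.drop_sublist _ _)).nodup hb
  · intro j hj
    have hjd : j ∈ order.drop t := (List.take_sublist _ _).subset hj
    have hdis := (List.nodup_append.1
      (by rw [List.take_append_drop]; exact hb :
        (order.take t ++ order.drop t).Nodup)).2.2
    exact foldl_not_mem I cu _ (fun hmem => hdis j hmem j hjd rfl)

lemma mgPrefix_succ (order : List N) {j : N} (hmem : j ∈ order) :
    mgPrefix I cu order (order.idxOf j + 1) =
      mgStep I cu (mgPrefix I cu order (order.idxOf j)) j := by
  have hlt : order.idxOf j < order.length := List.idxOf_lt_length_iff.2 hmem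
  unfold mgPrefix
  rw [List.take_succ, List.getElem?_eq_getElem hlt, List.getElem_idxOf hlt,
    List.foldl_append]
  rfl

lemma mgOutcome_eq_prefix_length (order : List N) :
    mgOutcome I cu order = mgPrefix I cu order order.length := by
  unfold mgOutcome mgPrefix; rw [List.take_length]

lemma mgOutcome_eq_prefix (order : List N) (hb : IsBaseline order) (j : N) :
    mgOutcome I cu order j = mgPrefix I cu order (order.idxOf j + 1) j := by
  have hmem := hb.2 j
  have hjtake : j ∈ order.take (order.idxOf j + 1) :=
    mem_take_of_indexOf_lt hmem (Nat.lt_succ_self _)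
  have hjdrop : j ∉ order.drop (order.idxOf j + 1) := by
    have hdis := (List.nodup_append.1
      (by rw [List.take_append_drop]; exact hb.1 :
        (order.take (order.idxOf j + 1) ++ order.drop (order.idxOf j + 1)).Nodup)).2.2
    exact fun h => hdis j hjtake j h rfl
  conv_lhs => rw [mgOutcome, ← List.take_append_drop (order.idxOf j + 1) order]
  rw [List.foldl_append]
  exact foldl_not_mem I cu _ hjdrop

lemma catCount_prefix_le_final (order : List N) (hb : IsBaseline order) (t : ℕ) (c : C) :
    catCount (mgPrefix I cu order t) c ≤ catCount (mgOutcome I cu order) c := by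
  rw [mgOutcome_eq_prefix_length]
  rcases le_or_gt t order.length with h | h
  · exact mgPrefix_mono I cu order hb.1 h c
  · have heq : order.take t = order.take order.length := by
      rw [List.take_length, List.take_of_length_le (le_of_lt h)]
    unfold mgPrefix
    rw [heq]

lemma mgStep_cases (μ : N → Option C) (j : N) :
    (∃ h : (∃ c, c ≠ cu ∧ I.Eligible j c ∧ catCount μ c < I.quota c),
        mgStep I cu μ j j = some h.choose)
    ∨ (¬ (∃ c, c ≠ cu ∧ I.Eligible j c ∧ catCount μ c < I.quota c) ∧
        catCount μ cu < I.quota cu ∧ mgStep I cu μ j j = some cu)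
    ∨ (¬ (∃ c, c ≠ cu ∧ I.Eligible j c ∧ catCount μ c < I.quota c) ∧
        ¬ catCount μ cu < I.quota cu ∧ mgStep I cu μ j j = μ j) := by
  unfold mgStep
  split_ifs with h1 h2
  · exact Or.inl ⟨h1, by rw [Function.update_self]⟩
  · exact Or.inr (Or.inl ⟨h1, h2, by rw [Function.update_self]⟩)
  · exact Or.inr (Or.inr ⟨h1, h2, rfl⟩)

lemma mg_unmatched (order : List N) (hb : IsBaseline order) {j : N}
    (hj : mgOutcome I cu order j = none) {c : C} (he : I.Eligible j c) :
    I.quota c ≤ catCount (mgPrefix I cu order (order.idxOf j)) c := by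
  rw [mgOutcome_eq_prefix I cu order hb j, mgPrefix_succ I cu order (hb.2 j)] at hj
  rcases mgStep_cases I cu (mgPrefix I cu order (order.idxOf j)) j with
    ⟨h, hv⟩ | ⟨h1, h2, hv⟩ | ⟨h1, h2, hv⟩
  · rw [hv] at hj; exact absurd hj (by simp)
  · rw [hv] at hj; exact absurd hj (by simp)
  · rcases eq_or_ne c cu with rfl | hc
    · exact not_lt.1 h2
    · exact not_lt.1 fun hlt => h1 ⟨c, hc, he, hlt⟩

lemma mg_matched (order : List N) (hb : IsBaseline order) {j : N} {c : C}
    (hj : mgOutcome I cu order j = some c) :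
    catCount (mgPrefix I cu order (order.idxOf j)) c < I.quota c := by
  rw [mgOutcome_eq_prefix I cu order hb j, mgPrefix_succ I cu order (hb.2 j)] at hj
  rcases mgStep_cases I cu (mgPrefix I cu order (order.idxOf j)) j with
    ⟨h, hv⟩ | ⟨h1, h2, hv⟩ | ⟨h1, h2, hv⟩
  · rw [hv] at hj
    obtain rfl : h.choose = c := by injection hj
    exact h.choose_spec.2.2
  · rw [hv] at hj
    obtain rfl : cu = c := by injection hj
    exact h2
  · rw [hv, mgPrefix_self_none] at hj; exact absurd hj (by simp)

lemma mg_matched_cu (order : List N) (hb : IsBaseline order) {j : N}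
    (hj : mgOutcome I cu order j = some cu) {c : C} (hc : c ≠ cu) (he : I.Eligible j c) :
    I.quota c ≤ catCount (mgPrefix I cu order (order.idxOf j)) c := by
  rw [mgOutcome_eq_prefix I cu order hb j, mgPrefix_succ I cu order (hb.2 j)] at hj
  rcases mgStep_cases I cu (mgPrefix I cu order (order.idxOf j)) j with
    ⟨h, hv⟩ | ⟨h1, _, hv⟩ | ⟨h1, h2, hv⟩
  · rw [hv] at hj
    have : h.choose = cu := by injection hj
    exact absurd this h.choose_spec.1
  · exact not_lt.1 fun hlt => h1 ⟨c, hc, he, hlt⟩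
  · exact not_lt.1 fun hlt => h1 ⟨c, hc, he, hlt⟩

end MGHelpers

/-- If each agent is eligible for at most one preferential category and all
categories' priorities are consistent with the baseline ordering, then the outcome of the
minimum-guarantees rule (i) complies with the eligibility requirements, (ii) is a maximum
beneficiary assignment, (iii) respects priorities, (iv) is non-wasteful, and (v) is order
preserving for `q_{c_u^1} = 0` and `q_{c_u^2} = q_{c_u}`. -/
theorem minimum_guarantees_properties (I : Inst N C) (cu : C) (order : List N)
    (hb : IsBaseline order) (hcuE : ∀ i : N, I.Eligible i cu)
    (hcons : Consistent I order) (hone : OneCategory I cu) :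
    I.IsMatching (mgOutcome I cu order) ∧
      Complies I (mgOutcome I cu order) ∧
      MaxBene I cu (mgOutcome I cu order) ∧
      RespectsPriorities I (mgOutcome I cu order) ∧
      NonWasteful I (mgOutcome I cu order) ∧
      OrderPreservingMG I cu (mgOutcome I cu order) := by
  have hM : I.IsMatching (mgOutcome I cu order) := by
    apply isMatching_foldl
    intro c
    simp
  have hC : Complies I (mgOutcome I cu order) := by
    apply complies_foldl I cu hcuE
    intro i c h
    simp at h
  have hNW : NonWasteful I (mgOutcome I cu order) := by
    intro i c he hnone
    refine le_antisymm (hM c) ?_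
    exact le_trans (mg_unmatched I cu order hb hnone he)
      (catCount_prefix_le_final I cu order hb _ c)
  have hRP : RespectsPriorities I (mgOutcome I cu order) := by
    rintro ⟨i, j, c, hi, hj, hs⟩
    have heligi := hC i c hi
    have heligj := elig_of_strict I hs heligi
    have hij : order.idxOf j < order.idxOf i := (hcons c j i heligj heligi).1 hs
    have h1 := mg_unmatched I cu order hb hj heligj
    have h2 := mg_matched I cu order hb hi
    exact absurd (le_trans h1 (mgPrefix_mono I cu order hb.1 (le_of_lt hij) c))
      (not_le.2 h2)
  have hOP : OrderPreservingMG I cu (mgOutcome I cu order) := by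
    intro i j ci cj hi hj hcj hs he hciu
    rw [hciu] at hi
    have heligj := hC j cj hj
    have hij : order.idxOf i < order.idxOf j := (hcons cj i j he heligj).1 hs
    have h1 := mg_matched_cu I cu order hb hi hcj he
    have h2 := mg_matched I cu order hb hj
    exact absurd (le_trans h1 (mgPrefix_mono I cu order hb.1 (le_of_lt hij) cj))
      (not_le.2 h2)
  have hmin : ∀ c, c ≠ cu → catCount (mgOutcome I cu order) c
      = min (I.quota c) ((Finset.univ.filter fun k => I.Eligible k c).card) := by
    intro c hc
    have hsub : (Finset.univ.filter fun k => mgOutcome I cu order k = some c)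
        ⊆ Finset.univ.filter fun k => I.Eligible k c := by
      intro k hk
      simp only [Finset.mem_filter, Finset.mem_univ, true_and] at *
      exact hC k c hk
    refine le_antisymm (le_min (hM c) (Finset.card_le_card hsub)) ?_
    by_contra hlt
    push_neg at hlt
    rw [lt_min_iff] at hlt
    obtain ⟨hq, hcard⟩ := hlt
    have hcard' : (Finset.univ.filter fun k => mgOutcome I cu order k = some c).card
        < (Finset.univ.filter fun k => I.Eligible k c).card := hcard
    have hne : (Finset.univ.filter fun k => mgOutcome I cu order k = some c)
        ≠ Finset.univ.filter fun k => I.Eligible k c :=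
      fun h => lt_irrefl _ (by rw [h] at hcard'; exact hcard')
    obtain ⟨k, hkB, hkA⟩ := Finset.exists_of_ssubset (lt_of_le_of_ne hsub hne)
    simp only [Finset.mem_filter, Finset.mem_univ, true_and] at hkB hkA
    cases hmo : mgOutcome I cu order k with
    | none =>
      have := mg_unmatched I cu order hb hmo hkB
      exact absurd (le_trans this (catCount_prefix_le_final I cu order hb _ c))
        (not_le.2 hq)
    | some c' =>
      have helig' := hC k c' hmo
      rcases eq_or_ne c' cu with heq | hc'
      · rw [heq] at hmo
        have := mg_matched_cu I cu order hb hmo hc hkB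
        exact absurd (le_trans this (catCount_prefix_le_final I cu order hb _ c))
          (not_le.2 hq)
      · exact hkA (by rw [hmo, hone k c' c hc' hc helig' hkB])
  have hMB : MaxBene I cu (mgOutcome I cu order) := by
    intro ν hνM hνC
    set T : Finset C := (Finset.univ.image fun i : N => (ν i).getD cu).erase cu with hT
    have hdisj : ∀ (σ : N → Option C), ∀ x ∈ T, ∀ y ∈ T, x ≠ y →
        Disjoint (Finset.univ.filter fun k => σ k = some x)
          (Finset.univ.filter fun k => σ k = some y) := by
      intro σ x _ y _ hxy
      rw [Finset.disjoint_left]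
      intro k hk hk'
      simp only [Finset.mem_filter, Finset.mem_univ, true_and] at hk hk'
      rw [hk] at hk'
      exact hxy (by injection hk')
    have hbν : beneCount cu ν = ∑ c ∈ T, catCount ν c := by
      unfold beneCount catCount
      rw [← Finset.card_biUnion (hdisj ν)]
      congr 1
      ext k
      simp only [Finset.mem_biUnion, Finset.mem_filter, Finset.mem_univ, true_and]
      constructor
      · rintro ⟨hn, hcu'⟩
        cases hν : ν k with
        | none => exact absurd hν hn
        | some c =>
          refine ⟨c, ?_, rfl⟩
          rw [hT, Finset.mem_erase]
          refine ⟨?_, Finset.mem_image.2 ⟨k, Finset.mem_univ k, by rw [hν]; rfl⟩⟩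
          rintro rfl; exact hcu' hν
      · rintro ⟨c, hcT, hν⟩
        have hc : c ≠ cu := (Finset.mem_erase.1 (hT ▸ hcT)).1
        refine ⟨by rw [hν]; simp, by rw [hν]; simp [hc]⟩
    have hsum : ∑ c ∈ T, catCount ν c ≤ ∑ c ∈ T, catCount (mgOutcome I cu order) c := by
      apply Finset.sum_le_sum
      intro c hcT
      have hc : c ≠ cu := (Finset.mem_erase.1 (hT ▸ hcT)).1
      rw [hmin c hc]
      refine le_min (hνM c) (Finset.card_le_card ?_)
      intro k hk
      simp only [Finset.mem_filter, Finset.mem_univ, true_and] at *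
      exact hνC k c hk
    have hbμ : ∑ c ∈ T, catCount (mgOutcome I cu order) c
        ≤ beneCount cu (mgOutcome I cu order) := by
      unfold beneCount catCount
      rw [← Finset.card_biUnion (hdisj _)]
      apply Finset.card_le_card
      intro k hk
      obtain ⟨c, hcT, hk⟩ := Finset.mem_biUnion.1 hk
      have hc : c ≠ cu := (Finset.mem_erase.1 (hT ▸ hcT)).1
      simp only [Finset.mem_filter, Finset.mem_univ, true_and] at hk ⊢
      exact ⟨by rw [hk]; simp, by rw [hk]; simp [hc]⟩
    calc beneCount cu ν = ∑ c ∈ T, catCount ν c := hbν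
      _ ≤ ∑ c ∈ T, catCount (mgOutcome I cu order) c := hsum
      _ ≤ beneCount cu (mgOutcome I cu order) := hbμ
  exact ⟨hM, hC, hMB, hRP, hNW, hOP⟩
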